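/- For α ∈ (0,1) and k ≥ 1, integrating by parts gives ∫₁^{1/α} arctan(√((1−αt)(t−1)))/t^{k+1} dt = (1/(2k)) ∫₁^{1/α} (1/t^{k+1}) · ((2t − (α+1)/α)/(t − (α+1)/α)) · 1/√((1−αt)(t−1)) dt, using that the arctan factor vanishes at both endpoints t = 1 and t = 1/α. -/

import Mathlib

open Real Set MeasureTheory


lemma aux_deriv (m : ℕ) (α : ℝ) (ha : 0 < α) (t : ℝ) (ht : t ∈ Set.Ioo 1 (1/α)) :
    HasDerivAt (fun t => -(1/((m:ℝ)+1)) * (Real.arctan (Real.sqrt ((1-α*t)*(t-1))) / t^(m+1)))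
      (Real.arctan (Real.sqrt ((1-α*t)*(t-1))) / t^(m+1+1)
        - (1/(2*((m:ℝ)+1))) * ((1/t^(m+1+1)) * (((2*t - (α+1)/α)/(t - (α+1)/α)) *
          (1/Real.sqrt ((1-α*t)*(t-1)))))) t := by
  obtain ⟨ht1, ht2⟩ := ht
  have htpos : 0 < t := by linarith
  have hαt : α * t < 1 := by
    have := (lt_div_iff₀ ha).mp ht2
    linarith
  have hP : 0 < (1-α*t)*(t-1) := mul_pos (by linarith) (by linarith)
  have hs : 0 < Real.sqrt ((1-α*t)*(t-1)) := Real.sqrt_pos.mpr hP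
  have htc : t - (α+1)/α < 0 := by
    have hcc : (α+1)/α = 1 + 1/α := by field_simp
    linarith
  have h1P : 0 < 1 + (1-α*t)*(t-1) := by nlinarith
  have d1 : HasDerivAt (fun t => (1-α*t)*(t-1)) ((1+α) - 2*(α*t)) t := by
    have h := (((hasDerivAt_id t).const_mul α).const_sub 1).mul ((hasDerivAt_id t).sub_const 1)
    simp only [id_eq] at h
    exact h.congr_deriv (by ring)
  have d2 : HasDerivAt (fun t => Real.sqrt ((1-α*t)*(t-1)))
      ((1/(2*Real.sqrt ((1-α*t)*(t-1)))) * ((1+α) - 2*(α*t))) t :=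
    (Real.hasDerivAt_sqrt (ne_of_gt hP)).comp t d1
  have d3 : HasDerivAt (fun t => Real.arctan (Real.sqrt ((1-α*t)*(t-1))))
      ((1/(1+(Real.sqrt ((1-α*t)*(t-1)))^2)) *
        ((1/(2*Real.sqrt ((1-α*t)*(t-1)))) * ((1+α) - 2*(α*t)))) t :=
    (Real.hasDerivAt_arctan _).comp t d2
  have d4 : HasDerivAt (fun t : ℝ => t^(m+1)) (((m:ℝ)+1)*t^m) t := by
    simpa using hasDerivAt_pow (m+1) t
  have d5 := (d3.div d4 (pow_ne_zero _ (ne_of_gt htpos))).const_mul (-(1/((m:ℝ)+1)))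
  refine d5.congr_deriv ?_
  symm
  rw [Real.sq_sqrt hP.le]
  set s := Real.sqrt ((1-α*t)*(t-1)) with hsdef
  have h1P' : 1 + (1-α*t)*(t-1) ≠ 0 := ne_of_gt h1P
  have hs' : s ≠ 0 := ne_of_gt hs
  have ht0 : t ≠ 0 := ne_of_gt htpos
  have htc' : t - (α+1)/α ≠ 0 := ne_of_lt htc
  have ha' : α ≠ 0 := ne_of_gt ha
  have key : (1/(1+(1-α*t)*(t-1))) * ((1/(2*s)) * ((1+α) - 2*(α*t)))
      = (1/(2*t)) * ((2*t - (α+1)/α)/(t - (α+1)/α) * (1/s)) := by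
    have gen1 : ∀ a b X : ℝ, a ≠ 0 → b ≠ 0 → (1/a) * ((1/b) * X) = X/(a*b) := by
      intro a b X h1 h2; field_simp
    have gen2 : ∀ a d e Y : ℝ, a ≠ 0 → d ≠ 0 → e ≠ 0 →
        (1/a) * (Y/d * (1/e)) = Y/(a*(d*e)) := by
      intro a d e Y h1 h2 h3; field_simp
    rw [gen1 _ _ _ h1P' (by positivity), gen2 _ _ _ _ (by positivity) htc' hs',
      div_eq_div_iff (mul_ne_zero h1P' (by positivity))
        (mul_ne_zero (by positivity) (mul_ne_zero htc' hs'))]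
    field_simp
    ring
  rw [key]
  set Q := (2*t - (α+1)/α)/(t - (α+1)/α) * (1/s) with hQ
  have hm : ((m:ℝ)+1) ≠ 0 := by positivity
  field_simp
  ring

set_option maxHeartbeats 1000000 in
lemma aux_int (k : ℕ) (α : ℝ) (ha : 0 < α) (ha1 : α < 1) :
    IntervalIntegrable (fun t => (1/t^(k+1)) * (((2*t - (α+1)/α)/(t - (α+1)/α)) *
      (1/Real.sqrt ((1-α*t)*(t-1))))) volume 1 (1/α) := by
  have hia : (1:ℝ) < 1/α := by rw [lt_div_iff₀ ha]; linarith
  obtain ⟨m, hm1, hm2⟩ : ∃ m : ℝ, 1 < m ∧ m < 1/α :=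
    ⟨(1 + 1/α)/2, by linarith, by linarith⟩
  have hαm : 0 < 1 - α*m := by
    have := (lt_div_iff₀ ha).mp hm2
    linarith
  set K : ℝ := 2*(1/α) + (α+1)/α with hK
  have hKpos : 0 < K := by positivity
  set K1 : ℝ := K * (1/Real.sqrt (1-α*m)) with hK1
  set K2 : ℝ := K * (1/Real.sqrt (m-1)) * (1/Real.sqrt α) with hK2
  have hK1pos : 0 < K1 := by
    have : 0 < Real.sqrt (1-α*m) := Real.sqrt_pos.mpr hαm
    positivity
  have hK2pos : 0 < K2 := by
    have h1 : 0 < Real.sqrt (m-1) := Real.sqrt_pos.mpr (by linarith)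
    have h2 : 0 < Real.sqrt α := Real.sqrt_pos.mpr ha
    positivity
  have i1 : IntervalIntegrable (fun x : ℝ => (x-1) ^ (-(1/2) : ℝ)) volume 1 (1/α) := by
    have := (intervalIntegral.intervalIntegrable_rpow' (a := 0) (b := 1/α - 1)
      (r := -(1/2)) (by norm_num)).comp_sub_right 1
    simpa using this
  have i2 : IntervalIntegrable (fun x : ℝ => (1/α - x) ^ (-(1/2) : ℝ)) volume 1 (1/α) := by
    have := (intervalIntegral.intervalIntegrable_rpow' (a := 1/α - 1) (b := 0)
      (r := -(1/2)) (by norm_num)).comp_sub_left (1/α)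
    simpa using this
  have ψint : IntervalIntegrable
      (fun t : ℝ => K1 * ((t-1) ^ (-(1/2) : ℝ)) + K2 * ((1/α - t) ^ (-(1/2) : ℝ)))
      volume 1 (1/α) := (i1.const_mul K1).add (i2.const_mul K2)
  apply ψint.mono_fun
  · apply Measurable.aestronglyMeasurable
    have m1 : Measurable fun t : ℝ => 1/t^(k+1) :=
      measurable_const.div (measurable_id.pow_const (k+1))
    have m2 : Measurable fun t : ℝ => (2*t - (α+1)/α)/(t - (α+1)/α) :=
      ((measurable_const.mul measurable_id).sub measurable_const).div
        (measurable_id.sub measurable_const)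
    have m3 : Measurable fun t : ℝ => 1/Real.sqrt ((1-α*t)*(t-1)) :=
      measurable_const.div (Real.continuous_sqrt.measurable.comp
        (((measurable_const.sub (measurable_const.mul measurable_id)).mul
          (measurable_id.sub measurable_const))))
    exact m1.mul (m2.mul m3)
  · rw [Set.uIoc_of_le hia.le]
    filter_upwards [MeasureTheory.ae_restrict_mem measurableSet_Ioc] with t ht
    obtain ⟨ht1, ht2⟩ := ht
    have hψ0 : 0 ≤ K1 * ((t-1) ^ (-(1/2) : ℝ)) + K2 * ((1/α - t) ^ (-(1/2) : ℝ)) := by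
      have e1 : (0:ℝ) ≤ (t-1) ^ (-(1/2) : ℝ) := Real.rpow_nonneg (by linarith) _
      have e2 : (0:ℝ) ≤ (1/α - t) ^ (-(1/2) : ℝ) := Real.rpow_nonneg (by linarith) _
      positivity
    rw [Real.norm_eq_abs, Real.norm_eq_abs, abs_of_nonneg hψ0]
    rcases eq_or_lt_of_le ht2 with heq | hlt
    · have hz : 1 - α*t = 0 := by rw [heq]; field_simp; simp
      rw [hz, zero_mul, Real.sqrt_zero, div_zero, mul_zero, mul_zero, abs_zero]
      exact hψ0
    -- main case : 1 < t < 1/α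
    have hαt : α * t < 1 := by have := (lt_div_iff₀ ha).mp hlt; linarith
    have hP : 0 < (1-α*t)*(t-1) := mul_pos (by linarith) (by linarith)
    have hsP : 0 < Real.sqrt ((1-α*t)*(t-1)) := Real.sqrt_pos.mpr hP
    have hcc : (α+1)/α = 1 + 1/α := by field_simp
    have hc0 : 0 < (α+1)/α := by positivity
    -- |1/t^(k+1)| ≤ 1
    have b1 : |1/t^(k+1)| ≤ 1 := by
      rw [abs_of_nonneg (by positivity)]
      rw [div_le_one (by positivity)]
      exact one_le_pow₀ (by linarith)
    -- |ratio| ≤ K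
    have b2 : |(2*t - (α+1)/α)/(t - (α+1)/α)| ≤ K := by
      rw [abs_div]
      have habs1 : |2*t - (α+1)/α| ≤ K := by
        rw [hK]
        apply abs_le.mpr
        constructor <;> [nlinarith; nlinarith]
      have habs2 : (1:ℝ) ≤ |t - (α+1)/α| := by
        have : t - (α+1)/α ≤ -1 := by rw [hcc]; linarith
        rw [abs_of_neg (by linarith)]
        linarith
      calc |2*t - (α+1)/α| / |t - (α+1)/α| ≤ K / 1 :=
            div_le_div₀ hKpos.le habs1 one_pos habs2
        _ = K := by rw [div_one]
    -- split √P
    have hsplit : Real.sqrt ((1-α*t)*(t-1)) = Real.sqrt (1-α*t) * Real.sqrt (t-1) :=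
      Real.sqrt_mul (by linarith) _
    have rpow1 : (t-1) ^ (-(1/2) : ℝ) = 1 / Real.sqrt (t-1) := by
      rw [Real.rpow_neg (by linarith), Real.sqrt_eq_rpow]
      exact (one_div _).symm
    have rpow2 : (1/α - t) ^ (-(1/2) : ℝ) = 1 / Real.sqrt (1/α - t) := by
      rw [Real.rpow_neg (by linarith), Real.sqrt_eq_rpow]
      exact (one_div _).symm
    -- bound 1/√P by one of the two terms
    have key : 1 / Real.sqrt ((1-α*t)*(t-1))
        ≤ (1/Real.sqrt (1-α*m)) * ((t-1) ^ (-(1/2) : ℝ))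
          + ((1/Real.sqrt (m-1)) * (1/Real.sqrt α)) * ((1/α - t) ^ (-(1/2) : ℝ)) := by
      rcases le_total t m with hcase | hcase
      · -- t ≤ m : use first term
        have h1 : Real.sqrt (1-α*m) ≤ Real.sqrt (1-α*t) := by
          apply Real.sqrt_le_sqrt; nlinarith
        have hs1 : 0 < Real.sqrt (1-α*t) := Real.sqrt_pos.mpr (by linarith)
        have hs2 : 0 < Real.sqrt (t-1) := Real.sqrt_pos.mpr (by linarith)
        have hb : 1 / Real.sqrt ((1-α*t)*(t-1))
            ≤ (1/Real.sqrt (1-α*m)) * ((t-1) ^ (-(1/2) : ℝ)) := by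
          rw [hsplit, rpow1, ← one_div_mul_one_div]
          apply mul_le_mul_of_nonneg_right _ (by positivity)
          exact one_div_le_one_div_of_le (Real.sqrt_pos.mpr hαm) h1
        refine hb.trans (le_add_of_nonneg_right ?_)
        have := Real.rpow_nonneg (show (0:ℝ) ≤ 1/α - t by linarith) (-(1/2) : ℝ)
        positivity
      · -- m ≤ t : use second term
        have hsm : Real.sqrt (m-1) ≤ Real.sqrt (t-1) := by
          apply Real.sqrt_le_sqrt; linarith
        have hfac : 1 - α*t = α * (1/α - t) := by field_simp
        have hs2 : 0 < Real.sqrt (t-1) := Real.sqrt_pos.mpr (by linarith)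
        have hb : 1 / Real.sqrt ((1-α*t)*(t-1))
            ≤ ((1/Real.sqrt (m-1)) * (1/Real.sqrt α)) * ((1/α - t) ^ (-(1/2) : ℝ)) := by
          rw [hsplit, rpow2, hfac, Real.sqrt_mul ha.le, ← one_div_mul_one_div]
          rw [show (1/Real.sqrt (m-1)) * (1/Real.sqrt α) * (1/Real.sqrt (1/α - t))
            = (1/Real.sqrt α * (1/Real.sqrt (1/α - t))) * (1/Real.sqrt (m-1)) by ring,
            ← one_div_mul_one_div]
          apply mul_le_mul_of_nonneg_left _ (by positivity)
          exact one_div_le_one_div_of_le (Real.sqrt_pos.mpr (by linarith)) hsm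
        refine hb.trans (le_add_of_nonneg_left ?_)
        have := Real.rpow_nonneg (show (0:ℝ) ≤ t - 1 by linarith) (-(1/2) : ℝ)
        positivity
    -- put it together
    calc |1/t^(k+1) * ((2*t - (α+1)/α)/(t - (α+1)/α) * (1/Real.sqrt ((1-α*t)*(t-1))))|
        = |1/t^(k+1)| * (|(2*t - (α+1)/α)/(t - (α+1)/α)| * |1/Real.sqrt ((1-α*t)*(t-1))|) := by
          rw [abs_mul, abs_mul]
      _ ≤ 1 * (K * (1/Real.sqrt ((1-α*t)*(t-1)))) := by
          apply mul_le_mul b1 _ (by positivity) one_pos.le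
          apply mul_le_mul b2 _ (by positivity) hKpos.le
          rw [abs_of_nonneg (by positivity)]
      _ = K * (1/Real.sqrt ((1-α*t)*(t-1))) := one_mul _
      _ ≤ K * ((1/Real.sqrt (1-α*m)) * ((t-1) ^ (-(1/2) : ℝ))
            + ((1/Real.sqrt (m-1)) * (1/Real.sqrt α)) * ((1/α - t) ^ (-(1/2) : ℝ))) :=
          mul_le_mul_of_nonneg_left key hKpos.le
      _ = K1 * ((t-1) ^ (-(1/2) : ℝ)) + K2 * ((1/α - t) ^ (-(1/2) : ℝ)) := by
          rw [hK1, hK2]; ring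

set_option maxHeartbeats 1000000 in
theorem stmt_14 (k : ℕ) (hk : 1 ≤ k) (α : ℝ) (hα : α ∈ Set.Ioo (0 : ℝ) 1) :
    ∫ t in (1 : ℝ)..(1 / α),
        Real.arctan (Real.sqrt ((1 - α * t) * (t - 1))) / t ^ (k + 1)
      = (1 / (2 * k)) *
        ∫ t in (1 : ℝ)..(1 / α),
          (1 / t ^ (k + 1)) * (((2 * t - (α + 1) / α) / (t - (α + 1) / α)) *
            (1 / Real.sqrt ((1 - α * t) * (t - 1)))) := by
  obtain ⟨ha, ha1⟩ := hα
  obtain ⟨m, rfl⟩ : ∃ m, k = m + 1 := ⟨k - 1, (Nat.succ_pred_eq_of_pos hk).symm⟩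
  have hia : (1:ℝ) < 1/α := by rw [lt_div_iff₀ ha]; linarith
  have hint : IntervalIntegrable (fun t => (1/t^(m+1+1)) * (((2*t - (α+1)/α)/(t - (α+1)/α)) *
      (1/Real.sqrt ((1-α*t)*(t-1))))) volume 1 (1/α) := aux_int (m+1) α ha ha1
  have hgint : IntervalIntegrable
      (fun t => Real.arctan (Real.sqrt ((1-α*t)*(t-1))) / t^(m+1+1)) volume 1 (1/α) := by
    apply ContinuousOn.intervalIntegrable
    apply ContinuousOn.div
    · exact (Real.continuous_arctan.comp (Real.continuous_sqrt.comp
        (by continuity))).continuousOn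
    · exact (continuous_pow _).continuousOn
    · intro x hx
      rw [Set.uIcc_of_le hia.le] at hx
      exact pow_ne_zero _ (ne_of_gt (by linarith [hx.1]))
  have hcont : ContinuousOn
      (fun t => -(1/((m:ℝ)+1)) * (Real.arctan (Real.sqrt ((1-α*t)*(t-1))) / t^(m+1)))
      (Set.Icc 1 (1/α)) := by
    apply ContinuousOn.mul continuousOn_const
    apply ContinuousOn.div
    · exact (Real.continuous_arctan.comp (Real.continuous_sqrt.comp
        (by continuity))).continuousOn
    · exact (continuous_pow _).continuousOn
    · intro x hx
      exact pow_ne_zero _ (ne_of_gt (by linarith [hx.1]))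
  have hderiv : ∀ x ∈ Set.Ioo (1:ℝ) (1/α), HasDerivWithinAt
      (fun t => -(1/((m:ℝ)+1)) * (Real.arctan (Real.sqrt ((1-α*t)*(t-1))) / t^(m+1)))
      (Real.arctan (Real.sqrt ((1-α*x)*(x-1))) / x^(m+1+1)
        - (1/(2*((m:ℝ)+1))) * ((1/x^(m+1+1)) * (((2*x - (α+1)/α)/(x - (α+1)/α)) *
          (1/Real.sqrt ((1-α*x)*(x-1)))))) (Set.Ioi x) x :=
    fun x hx => (aux_deriv m α ha x hx).hasDerivWithinAt
  have hftc := intervalIntegral.integral_eq_sub_of_hasDeriv_right_of_le hia.le hcont hderiv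
    (hgint.sub (hint.const_mul (1/(2*((m:ℝ)+1)))))
  have hH1 : -(1/((m:ℝ)+1)) * (Real.arctan (Real.sqrt ((1-α*1)*((1:ℝ)-1))) / (1:ℝ)^(m+1)) = 0 := by
    simp
  have hH2 : -(1/((m:ℝ)+1)) *
      (Real.arctan (Real.sqrt ((1-α*(1/α))*((1/α:ℝ)-1))) / (1/α:ℝ)^(m+1)) = 0 := by
    have hz : 1 - α*(1/α) = 0 := by field_simp; simp
    rw [hz, zero_mul, Real.sqrt_zero, Real.arctan_zero, zero_div, mul_zero]
  rw [intervalIntegral.integral_sub hgint (hint.const_mul (1/(2*((m:ℝ)+1)))),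
    intervalIntegral.integral_const_mul] at hftc
  rw [hH1, hH2] at hftc
  have hfin : ∫ t in (1:ℝ)..(1/α), Real.arctan (Real.sqrt ((1-α*t)*(t-1))) / t^(m+1+1)
      = (1/(2*((m:ℝ)+1))) * ∫ t in (1:ℝ)..(1/α), (1/t^(m+1+1)) *
        (((2*t - (α+1)/α)/(t - (α+1)/α)) * (1/Real.sqrt ((1-α*t)*(t-1)))) := by
    linarith [hftc]
  convert hfin using 3
  push_cast
  ring
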